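/- (PER identity) Let θ, θ' be i.i.d. real random variables with common continuous distribution F, and let V_α = P(θ ≥ F⁻¹(1−α) | D) for a conditioning σ-algebra (or data D). Then P(θ ≤ θ' | D) = 1 − ∫₀¹ V_α dα, where θ' is independent of (θ, D). -/
import Mathlib


open MeasureTheory

/-- PER identity: With `ν` the conditional law of `θ` given the data `D`,
`F` the common continuous strictly increasing CDF of `θ` and of the independent copy `θ'`
(with quantile function `Finv`), the posterior expected relative rank satisfies
`P(θ ≤ θ' | D) = ∫ (1 - F t) dν(t) = 1 - ∫₀¹ V_α dα`, where
`V_α = P(θ ≥ F⁻¹(1-α) | D) = ν {t : t ≥ Finv (1-α)}`. -/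
theorem stmt5 (ν : Measure ℝ) [IsProbabilityMeasure ν] (F Finv : ℝ → ℝ)
    (hFc : Continuous F) (hFm : StrictMono F)
    (hrange : ∀ t, F t ∈ Set.Icc (0 : ℝ) 1)
    (hgal : ∀ p ∈ Set.Ioo (0 : ℝ) 1, ∀ t, Finv p ≤ t ↔ p ≤ F t) :
    ∫ t, (1 - F t) ∂ν
      = 1 - ∫ α in Set.Ioo (0 : ℝ) 1, (ν {t | Finv (1 - α) ≤ t}).toReal := by
  have hintF : Integrable F ν := by
    refine (integrable_const (1 : ℝ)).mono' hFc.aestronglyMeasurable ?_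
    filter_upwards with t
    have h := hrange t
    rw [Real.norm_eq_abs, abs_le]
    constructor <;> [linarith [h.1]; exact h.2]
  -- step 1: split the integral
  have h1 : ∫ t, (1 - F t) ∂ν = 1 - ∫ t, F t ∂ν := by
    rw [integral_sub (integrable_const 1) hintF]
    simp
  rw [h1]
  congr 1
  -- step 2: layer cake
  have h2 : ∫ t, F t ∂ν
      = ∫ s in Set.Ioc (0 : ℝ) 1, (ν {a | s ≤ F a}).toReal := by
    refine hintF.integral_eq_integral_Ioc_meas_le ?_ ?_
    · filter_upwards with t; exact (hrange t).1
    · filter_upwards with t; exact (hrange t).2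
  rw [h2, MeasureTheory.integral_Ioc_eq_integral_Ioo]
  -- step 3: change of variables α ↦ 1 - α on (0,1) via indicator trick
  set g : ℝ → ℝ := Set.indicator (Set.Ioo (0 : ℝ) 1)
      (fun s => (ν {a | s ≤ F a}).toReal) with hg
  have h3 : ∫ x, g (1 - x) = ∫ x, g x := integral_sub_left_eq_self g (volume) 1
  have hgl : ∫ x, g x = ∫ s in Set.Ioo (0 : ℝ) 1, (ν {a | s ≤ F a}).toReal := by
    rw [hg, integral_indicator measurableSet_Ioo]
  have hgr : ∫ x, g (1 - x)
      = ∫ α in Set.Ioo (0 : ℝ) 1, (ν {t | Finv (1 - α) ≤ t}).toReal := by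
    have hcomp : (fun x => g (1 - x))
        = Set.indicator (Set.Ioo (0 : ℝ) 1)
            (fun α => (ν {t | Finv (1 - α) ≤ t}).toReal) := by
      funext x
      by_cases hx : x ∈ Set.Ioo (0 : ℝ) 1
      · have hx' : (1 - x) ∈ Set.Ioo (0 : ℝ) 1 := by
          constructor <;> [linarith [hx.2]; linarith [hx.1]]
        have hset : {t | Finv (1 - x) ≤ t} = {a | 1 - x ≤ F a} := by
          ext a; exact hgal (1 - x) hx' a
        rw [hg, Set.indicator_of_mem hx', Set.indicator_of_mem hx, hset]
      · have hx' : (1 - x) ∉ Set.Ioo (0 : ℝ) 1 := by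
          simp only [Set.mem_Ioo, not_and_or, not_lt] at hx ⊢
          rcases hx with h | h
          · right; linarith
          · left; linarith
        rw [hg, Set.indicator_of_notMem hx', Set.indicator_of_notMem hx]
    rw [hcomp, integral_indicator measurableSet_Ioo]
  rw [← hgl, ← h3, hgr]
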